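/- Let u : [0,T] × ℝ → ℝ be continuous in t, Lipschitz in x uniformly in t, with |u_x(t,x)| ≤ L for all (t,x), and let q(t,x) be the flow defined by ∂_t q(t,x) = u(t, q(t,x)), q(0,x) = x. Then q(t,·) is differentiable in x with q_x(t,x) = exp(∫_0^t u_x(s, q(s,x)) ds), and in particular e^{-Lt} ≤ q_x(t,x) ≤ e^{Lt} for all t ∈ [0,T] and x ∈ ℝ; moreover, if additionally y(t,·) := u(t,·) - u_xx(t,·) is C¹ and u solves the Camassa–Holm equation (so y_t + u y_x + 2 u_x y = 0), then y(0,x) = y(t, q(t,x)) q_x(t,x)² for all t and x. -/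

import Mathlib

open MeasureTheory Real intervalIntegral

open MeasureTheory Real intervalIntegral Set Filter Topology

section helpers

/-- sign consistency: a continuous nonvanishing function on `[0,t]` has `f 0 * f t > 0`. -/
lemma same_sign {f : ℝ → ℝ} {t : ℝ} (ht : 0 ≤ t) (hc : ContinuousOn f (Set.Icc 0 t))
    (hne : ∀ s ∈ Set.Icc 0 t, f s ≠ 0) : 0 < f 0 * f t := by
  have h0 : f 0 ≠ 0 := hne 0 ⟨le_rfl, ht⟩
  have h1 : f t ≠ 0 := hne t ⟨ht, le_rfl⟩
  rcases lt_or_gt_of_ne h0 with h0' | h0' <;> rcases lt_or_gt_of_ne h1 with h1' | h1'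
  · exact mul_pos_of_neg_of_neg h0' h1'
  · exfalso
    have := intermediate_value_Icc ht hc (a := 0) ⟨h0'.le, h1'.le⟩
    obtain ⟨s, hs, hfs⟩ := this
    exact hne s hs hfs
  · exfalso
    have := intermediate_value_Icc' ht hc (a := 0) ⟨h1'.le, h0'.le⟩
    obtain ⟨s, hs, hfs⟩ := this
    exact hne s hs hfs
  · exact mul_pos h0' h1'

lemma eq_of_abs_eq_of_sign {p r E : ℝ} (hE : 0 < E) (habs : |p| = |r| * E)
    (hsign : 0 < r * p) : p = r * E := by
  rcases lt_or_gt_of_ne (fun h : r = 0 => by simp [h] at hsign) with hr | hr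
  · have hp : p < 0 := by nlinarith
    rw [abs_of_neg hp, abs_of_neg hr] at habs; linarith
  · have hp : 0 < p := by nlinarith
    rw [abs_of_pos hp, abs_of_pos hr] at habs; linarith

/-- if `k' = c` with `|c| ≤ K |k|` everywhere and `k σ = 0`, then `k ≡ 0`. -/
lemma zero_of_ode_forward {k c : ℝ → ℝ} {K : ℝ} (hK : 0 ≤ K)
    (hk' : ∀ s, HasDerivAt k (c s) s) (hb : ∀ s, |c s| ≤ K * |k s|)
    {σ τ : ℝ} (hστ : σ ≤ τ) (h0 : k σ = 0) : k τ = 0 := by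
  have := norm_le_gronwallBound_of_norm_deriv_right_le (f := k) (f' := c)
    (δ := 0) (K := K) (ε := 0) (a := σ) (b := τ)
    (fun s _ => (hk' s).continuousAt.continuousWithinAt)
    (fun s _ => (hk' s).hasDerivWithinAt)
    (by simp [h0]) (fun s _ => by simpa [Real.norm_eq_abs] using hb s) τ ⟨hστ, le_rfl⟩
  rw [gronwallBound_ε0_δ0] at this
  simpa [Real.norm_eq_abs, abs_nonpos_iff] using this

lemma zero_of_ode {k c : ℝ → ℝ} {K : ℝ} (hK : 0 ≤ K)
    (hk' : ∀ s, HasDerivAt k (c s) s) (hb : ∀ s, |c s| ≤ K * |k s|)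
    {σ : ℝ} (h0 : k σ = 0) : ∀ τ, k τ = 0 := by
  intro τ
  rcases le_total σ τ with h | h
  · exact zero_of_ode_forward hK hk' hb h h0
  · have hrev : ∀ s, HasDerivAt (fun s => k (σ + τ - s)) (-(c (σ + τ - s))) s := by
      intro s
      have h1 : HasDerivAt (fun s : ℝ => σ + τ - s) (-1) s := by
        simpa using (hasDerivAt_id s).const_sub (σ + τ)
      simpa [mul_comm, Function.comp_def] using (hk' (σ + τ - s)).comp s h1
    have := zero_of_ode_forward (k := fun s => k (σ + τ - s)) (c := fun s => -(c (σ + τ - s)))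
      hK hrev (fun s => by simpa using hb (σ + τ - s)) h (by simpa using h0)
    simpa using this

end helpers

section flow

variable {L : ℝ} {u q : ℝ → ℝ → ℝ}

lemma lip_of (hL : 0 ≤ L) (hu_diff : ∀ t, Differentiable ℝ (u t))
    (hu_lip : ∀ t x, |deriv (u t) x| ≤ L) (s : ℝ) :
    LipschitzWith L.toNNReal (u s) := by
  apply lipschitzWith_of_nnnorm_deriv_le (hu_diff s)
  intro x
  rw [← NNReal.coe_le_coe, coe_nnnorm, Real.coe_toNNReal L hL, Real.norm_eq_abs]
  exact hu_lip s x

/-- backward uniqueness: flows starting at distinct points stay distinct for `s ≥ 0`. -/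
lemma flow_sep (hL : 0 ≤ L) (hu_diff : ∀ t, Differentiable ℝ (u t))
    (hu_lip : ∀ t x, |deriv (u t) x| ≤ L)
    (hq0 : ∀ x, q 0 x = x)
    (hq : ∀ t x, HasDerivAt (fun τ => q τ x) (u t (q t x)) t)
    {x x' : ℝ} (hxx : x ≠ x') {s : ℝ} (hs : 0 ≤ s) : q s x ≠ q s x' := by
  intro heq
  apply hxx
  have key : EqOn (fun τ => q (s - τ) x) (fun τ => q (s - τ) x') (Set.Icc 0 s) := by
    apply ODE_solution_unique (v := fun τ w => -(u (s - τ) w)) (K := L.toNNReal)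
    · exact fun τ => (lip_of hL hu_diff hu_lip (s - τ)).neg
    · exact Continuous.continuousOn <| by
        exact ((continuous_iff_continuousAt.2 fun t => (hq t x).continuousAt).comp
          (continuous_const.sub continuous_id))
    · intro τ _
      have h1 : HasDerivAt (fun τ : ℝ => s - τ) (-1) τ := by
        simpa using (hasDerivAt_id τ).const_sub s
      have h2 : HasDerivAt (fun τ => q (s - τ) x) (-(u (s - τ) (q (s - τ) x))) τ := by
        simpa [mul_comm, Function.comp_def] using ((hq (s - τ) x).comp τ h1)
      exact h2.hasDerivWithinAt
    · exact Continuous.continuousOn <| by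
        exact ((continuous_iff_continuousAt.2 fun t => (hq t x').continuousAt).comp
          (continuous_const.sub continuous_id))
    · intro τ _
      have h1 : HasDerivAt (fun τ : ℝ => s - τ) (-1) τ := by
        simpa using (hasDerivAt_id τ).const_sub s
      have h2 : HasDerivAt (fun τ => q (s - τ) x') (-(u (s - τ) (q (s - τ) x'))) τ := by
        simpa [mul_comm, Function.comp_def] using ((hq (s - τ) x').comp τ h1)
      exact h2.hasDerivWithinAt
    · simpa using heq
  have := key ⟨hs, le_rfl⟩
  simpa [hq0] using this

end flow

section delta

variable {L : ℝ} {u q : ℝ → ℝ → ℝ}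

lemma slope_bound (hL : 0 ≤ L) (hu_diff : ∀ t, Differentiable ℝ (u t))
    (hu_lip : ∀ t x, |deriv (u t) x| ≤ L) (s p r : ℝ) :
    |(u s p - u s r) / (p - r)| ≤ L := by
  rcases eq_or_ne p r with h | h
  · simp [h, hL]
  · have hlip := (lip_of hL hu_diff hu_lip s).dist_le_mul p r
    rw [Real.dist_eq, Real.dist_eq, Real.coe_toNNReal L hL] at hlip
    rw [abs_div]
    rw [div_le_iff₀ (abs_pos.2 (sub_ne_zero.2 h))]
    exact hlip

lemma cont_flow_t (hq : ∀ t x, HasDerivAt (fun τ => q τ x) (u t (q t x)) t) (x : ℝ) :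
    Continuous fun s => q s x :=
  continuous_iff_continuousAt.2 fun t => (hq t x).continuousAt

lemma delta_formula (hL : 0 ≤ L) (hu_cont : Continuous (Function.uncurry u))
    (hu_diff : ∀ t, Differentiable ℝ (u t))
    (hu_lip : ∀ t x, |deriv (u t) x| ≤ L)
    (hq0 : ∀ x, q 0 x = x)
    (hq : ∀ t x, HasDerivAt (fun τ => q τ x) (u t (q t x)) t)
    {x x' : ℝ} (hxx : x ≠ x') {t : ℝ} (ht : 0 ≤ t) :
    q t x' - q t x = (x' - x) *
      Real.exp (∫ s in (0:ℝ)..t, (u s (q s x') - u s (q s x)) / (q s x' - q s x)) := by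
  set δ : ℝ → ℝ := fun s => q s x' - q s x with hδdef
  set a : ℝ → ℝ := fun s => (u s (q s x') - u s (q s x)) / (q s x' - q s x) with hadef
  have hδ_ne : ∀ s, 0 ≤ s → δ s ≠ 0 := fun s hs =>
    sub_ne_zero.2 (flow_sep hL hu_diff hu_lip hq0 hq hxx.symm hs)
  have hδ' : ∀ s, HasDerivAt δ (u s (q s x') - u s (q s x)) s :=
    fun s => (hq s x').sub (hq s x)
  have hδcont : Continuous δ := (cont_flow_t hq x').sub (cont_flow_t hq x)
  have hnumcont : Continuous fun s => u s (q s x') - u s (q s x) :=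
    (hu_cont.comp (continuous_id.prodMk (cont_flow_t hq x'))).sub
      (hu_cont.comp (continuous_id.prodMk (cont_flow_t hq x)))
  have hacont : ContinuousOn a (Set.Icc 0 t) :=
    (hnumcont.continuousOn.div hδcont.continuousOn (fun s hs => hδ_ne s hs.1))
  have huIcc : Set.uIcc (0:ℝ) t = Set.Icc 0 t := Set.uIcc_of_le ht
  have hφ : ∀ s ∈ Set.uIcc (0:ℝ) t, HasDerivAt (fun s => Real.log (δ s)) (a s) s := by
    intro s hs
    rw [huIcc] at hs
    exact (hδ' s).log (hδ_ne s hs.1)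
  have hint : IntervalIntegrable a MeasureTheory.volume 0 t := by
    rw [intervalIntegrable_iff_integrableOn_Icc_of_le ht]
    exact hacont.integrableOn_Icc
  have hFTC := intervalIntegral.integral_eq_sub_of_hasDerivAt hφ hint
  -- exp of both sides
  have hE : Real.exp (∫ s in (0:ℝ)..t, a s) = |δ t| / |δ 0| := by
    rw [hFTC, Real.exp_sub, Real.exp_log_eq_abs (hδ_ne t ht),
      Real.exp_log_eq_abs (hδ_ne 0 le_rfl)]
  have hδ0 : δ 0 = x' - x := by simp [hδdef, hq0]
  have habs : |δ t| = |δ 0| * Real.exp (∫ s in (0:ℝ)..t, a s) := by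
    rw [hE, mul_div_assoc', mul_comm, mul_div_assoc,
      div_self (abs_ne_zero.2 (hδ_ne 0 le_rfl)), mul_one]
  have hδ_ne' : ∀ s ∈ Set.Icc (0:ℝ) t, δ s ≠ 0 := fun s hs => hδ_ne s hs.1
  have hsign : 0 < δ 0 * δ t :=
    same_sign ht hδcont.continuousOn hδ_ne' 
  have := eq_of_abs_eq_of_sign (Real.exp_pos _) habs hsign
  rw [← hδ0]
  exact this

end delta

section more

variable {L : ℝ} {u q : ℝ → ℝ → ℝ}

lemma flow_cont_x (hL : 0 ≤ L) (hu_cont : Continuous (Function.uncurry u))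
    (hu_diff : ∀ t, Differentiable ℝ (u t))
    (hu_lip : ∀ t x, |deriv (u t) x| ≤ L)
    (hq0 : ∀ x, q 0 x = x)
    (hq : ∀ t x, HasDerivAt (fun τ => q τ x) (u t (q t x)) t)
    (x x' : ℝ) {s : ℝ} (hs : 0 ≤ s) :
    |q s x' - q s x| ≤ |x' - x| * Real.exp (L * s) := by
  rcases eq_or_ne x x' with h | h
  · subst h
    simp only [sub_self, abs_zero]
    positivity
  · rw [delta_formula hL hu_cont hu_diff hu_lip hq0 hq h hs, abs_mul, Real.abs_exp]
    apply mul_le_mul_of_nonneg_left _ (abs_nonneg _)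
    rw [Real.exp_le_exp]
    calc (∫ σ in (0:ℝ)..s, (u σ (q σ x') - u σ (q σ x)) / (q σ x' - q σ x))
        ≤ |∫ σ in (0:ℝ)..s, (u σ (q σ x') - u σ (q σ x)) / (q σ x' - q σ x)| := le_abs_self _
      _ ≤ L * |s - 0| := by
          have := intervalIntegral.norm_integral_le_of_norm_le_const (a := (0:ℝ)) (b := s)
            (C := L) (f := fun σ => (u σ (q σ x') - u σ (q σ x)) / (q σ x' - q σ x))
            (fun σ _ => slope_bound hL hu_diff hu_lip σ _ _)
          simpa [Real.norm_eq_abs] using this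
      _ = L * s := by rw [sub_zero, abs_of_nonneg hs]

lemma b_meas (hu_cont : Continuous (Function.uncurry u))
    (hu_diff : ∀ t, Differentiable ℝ (u t))
    (hq : ∀ t x, HasDerivAt (fun τ => q τ x) (u t (q t x)) t) (x : ℝ) :
    Measurable fun s => deriv (u s) (q s x) := by
  have hF : ∀ n : ℕ, Continuous fun s =>
      (u s (q s x + 1 / ((n:ℝ) + 1)) - u s (q s x)) * ((n:ℝ) + 1) := by
    intro n
    exact ((hu_cont.comp (continuous_id.prodMk ((cont_flow_t hq x).add continuous_const))).sub
      (hu_cont.comp (continuous_id.prodMk (cont_flow_t hq x)))).mul continuous_const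
  apply measurable_of_tendsto_metrizable (fun n => (hF n).measurable)
  rw [tendsto_pi_nhds]
  intro s
  have hd := hasDerivAt_iff_tendsto_slope.1 ((hu_diff s) (q s x)).hasDerivAt
  have hseq : Tendsto (fun n : ℕ => q s x + 1 / ((n:ℝ) + 1)) atTop (𝓝[≠] (q s x)) := by
    rw [tendsto_nhdsWithin_iff]
    constructor
    · have : Tendsto (fun n : ℕ => 1 / ((n:ℝ) + 1)) atTop (𝓝 0) :=
        tendsto_one_div_add_atTop_nhds_zero_nat
      simpa using tendsto_const_nhds.add this
    · filter_upwards with n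
      simp only [Set.mem_compl_iff, Set.mem_singleton_iff]
      intro hcon
      have : (1:ℝ) / ((n:ℝ) + 1) = 0 := by linarith
      simp [div_eq_zero_iff] at this
      linarith [Nat.cast_nonneg (α := ℝ) n]
  have := hd.comp hseq
  apply this.congr
  intro n
  simp only [Function.comp_apply, slope_def_field]
  rw [add_sub_cancel_left, div_div_eq_mul_div, div_one]

end more

/-- Properties of the flow `q` of a time-dependent vector field `u` with
`|u_x| ≤ L`: the spatial derivative of the flow is
`q_x(t,x) = exp(∫₀ᵗ u_x(s,q(s,x)) ds)`, hence `e^{-Lt} ≤ q_x ≤ e^{Lt}`;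
moreover, if `y = u - u_xx` is `C¹` and satisfies the transport equation
`y_t + u y_x + 2 u_x y = 0` (i.e. `u` solves Camassa–Holm), then
`y(0,x) = y(t,q(t,x)) q_x(t,x)²`. -/
theorem stmt19 (T L : ℝ) (hT : 0 < T) (hL : 0 ≤ L) (u : ℝ → ℝ → ℝ)
    (hu_cont : Continuous (Function.uncurry u))
    (hu_diff : ∀ t, Differentiable ℝ (u t))
    (hu_lip : ∀ t x, |deriv (u t) x| ≤ L)
    (q : ℝ → ℝ → ℝ)
    (hq0 : ∀ x, q 0 x = x)
    (hq : ∀ t x, HasDerivAt (fun τ => q τ x) (u t (q t x)) t) :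
    ∀ t ∈ Set.Icc 0 T, ∀ x : ℝ,
      -- formula for the spatial derivative of the flow
      HasDerivAt (fun ξ => q t ξ)
        (Real.exp (∫ s in (0:ℝ)..t, deriv (u s) (q s x))) x ∧
      -- two-sided exponential bounds
      Real.exp (-L * t) ≤ Real.exp (∫ s in (0:ℝ)..t, deriv (u s) (q s x)) ∧
      Real.exp (∫ s in (0:ℝ)..t, deriv (u s) (q s x)) ≤ Real.exp (L * t) ∧
      -- conservation of `y q_x²` along the flow
      (∀ y : ℝ → ℝ → ℝ,
        (∀ t' x', y t' x' = u t' x' - deriv (deriv (u t')) x') →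
        ContDiff ℝ 1 (Function.uncurry y) →
        (∀ t' x', deriv (fun τ => y τ x') t' + u t' x' * deriv (y t') x'
            + 2 * deriv (u t') x' * y t' x' = 0) →
        y 0 x = y t (q t x) *
          (Real.exp (∫ s in (0:ℝ)..t, deriv (u s) (q s x)))^2) := by
  intro t ht x
  obtain ⟨ht0, htT⟩ := ht
  set b : ℝ → ℝ := fun s => deriv (u s) (q s x) with hbdef
  set A : ℝ := ∫ s in (0:ℝ)..t, b s with hAdef
  -- interval integrability of b
  have hbint : IntervalIntegrable b MeasureTheory.volume 0 t := by
    rw [intervalIntegrable_iff, Set.uIoc_of_le ht0]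
    apply MeasureTheory.Integrable.mono' (g := fun _ => L)
      (MeasureTheory.integrableOn_const measure_Ioc_lt_top.ne)
      ((b_meas hu_cont hu_diff hq x).aestronglyMeasurable.restrict)
    exact MeasureTheory.ae_of_all _ fun s => by
      simpa [Real.norm_eq_abs] using hu_lip s (q s x)
  -- convergence of the integrals
  have hInt : Tendsto (fun x' => ∫ s in (0:ℝ)..t,
      (u s (q s x') - u s (q s x)) / (q s x' - q s x)) (𝓝[≠] x) (𝓝 A) := by
    apply intervalIntegral.tendsto_integral_filter_of_dominated_convergence (bound := fun _ => L)
    · filter_upwards [self_mem_nhdsWithin] with x' hx'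
      have hx' : x ≠ x' := fun h => hx' h.symm
      have hδ_ne : ∀ s ∈ Set.Icc (0:ℝ) t, q s x' - q s x ≠ 0 := fun s hs =>
        sub_ne_zero.2 (flow_sep hL hu_diff hu_lip hq0 hq hx'.symm hs.1)
      have hcont : ContinuousOn (fun s => (u s (q s x') - u s (q s x)) / (q s x' - q s x))
          (Set.Icc 0 t) := by
        apply ContinuousOn.div
        · exact ((hu_cont.comp (continuous_id.prodMk (cont_flow_t hq x'))).sub
            (hu_cont.comp (continuous_id.prodMk (cont_flow_t hq x)))).continuousOn
        · exact ((cont_flow_t hq x').sub (cont_flow_t hq x)).continuousOn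
        · exact hδ_ne
      exact (hcont.aestronglyMeasurable measurableSet_Icc).mono_measure
        (MeasureTheory.Measure.restrict_mono
          (by rw [Set.uIoc_of_le ht0]; exact Set.Ioc_subset_Icc_self) le_rfl)
    · filter_upwards with x'
      apply MeasureTheory.ae_of_all
      intro s _
      rw [Real.norm_eq_abs]
      exact slope_bound hL hu_diff hu_lip s (q s x') (q s x)
    · exact intervalIntegrable_const
    · apply MeasureTheory.ae_of_all
      intro s hs
      rw [Set.uIoc_of_le ht0] at hs
      have hs0 : 0 ≤ s := hs.1.le
      have hq_tendsto : Tendsto (fun x' => q s x') (𝓝[≠] x) (𝓝[≠] (q s x)) := by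
        rw [tendsto_nhdsWithin_iff]
        constructor
        · apply Tendsto.mono_left _ nhdsWithin_le_nhds
          rw [tendsto_iff_dist_tendsto_zero]
          apply squeeze_zero (fun x' => dist_nonneg)
            (g := fun x' => |x' - x| * Real.exp (L * s))
          · intro x'
            simpa [Real.dist_eq] using
              flow_cont_x hL hu_cont hu_diff hu_lip hq0 hq x x' hs0
          · have hcont : Continuous fun x' : ℝ => |x' - x| * Real.exp (L * s) :=
              ((continuous_id.sub continuous_const).abs).mul continuous_const
            have := hcont.tendsto x
            simpa using this
        · filter_upwards [self_mem_nhdsWithin] with x' hx'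
          have hx' : x' ≠ x := hx'
          exact flow_sep hL hu_diff hu_lip hq0 hq hx' hs0
      have := (hasDerivAt_iff_tendsto_slope.1 ((hu_diff s) (q s x)).hasDerivAt).comp hq_tendsto
      apply this.congr
      intro x'
      simp [Function.comp_apply, slope_def_field]
  -- the delta formula gives the slope
  have hslope : Tendsto (slope (fun ξ => q t ξ) x) (𝓝[≠] x) (𝓝 (Real.exp A)) := by
    apply Tendsto.congr' _ ((Real.continuous_exp.tendsto _).comp hInt)
    filter_upwards [self_mem_nhdsWithin] with x' hx'
    have hx' : x ≠ x' := fun h => hx' h.symm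
    rw [Function.comp_apply, slope_def_field,
      delta_formula hL hu_cont hu_diff hu_lip hq0 hq hx' ht0,
      mul_div_cancel_left₀ _ (sub_ne_zero.2 (Ne.symm hx'))]
  have part1 : HasDerivAt (fun ξ => q t ξ) (Real.exp A) x :=
    hasDerivAt_iff_tendsto_slope.2 hslope
  -- bounds
  have hAbs : |A| ≤ L * t := by
    have := intervalIntegral.norm_integral_le_of_norm_le_const (a := (0:ℝ)) (b := t)
      (C := L) (f := b) (fun s _ => by simpa [Real.norm_eq_abs] using hu_lip s (q s x))
    simpa [Real.norm_eq_abs, abs_of_nonneg ht0] using this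
  refine ⟨part1, ?_, ?_, ?_⟩
  · rw [Real.exp_le_exp]; have := (abs_le.1 hAbs).1; linarith
  · rw [Real.exp_le_exp]; exact (abs_le.1 hAbs).2
  -- conservation
  intro y hydef hyC1 hpde
  set k : ℝ → ℝ := fun s => y s (q s x) with hkdef
  have hk' : ∀ s, HasDerivAt k (-2 * b s * k s) s := by
    intro s
    set z := q s x with hzdef
    have hdy : HasFDerivAt (Function.uncurry y) (fderiv ℝ (Function.uncurry y) (s, z)) (s, z) :=
      ((hyC1.differentiable one_ne_zero) (s, z)).hasFDerivAt
    set D := fderiv ℝ (Function.uncurry y) (s, z) with hDdef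
    have hcomp : HasDerivAt k (D (1, u s z)) s := by
      have hpair : HasDerivAt (fun τ => (τ, q τ x)) ((1:ℝ), u s z) s :=
        (hasDerivAt_id s).prodMk (hq s x)
      exact hdy.comp_hasDerivAt s hpair
    have hts : HasDerivAt (fun τ => y τ z) (D (1, 0)) s := by
      have hpair : HasDerivAt (fun τ : ℝ => (τ, z)) ((1:ℝ), (0:ℝ)) s :=
        (hasDerivAt_id s).prodMk (hasDerivAt_const s z)
      exact hdy.comp_hasDerivAt s hpair
    have hxs : HasDerivAt (y s) (D (0, 1)) z := by
      have hpair : HasDerivAt (fun w : ℝ => (s, w)) ((0:ℝ), (1:ℝ)) z :=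
        (hasDerivAt_const z s).prodMk (hasDerivAt_id z)
      exact hdy.comp_hasDerivAt z hpair
    have hsplit : D (1, u s z) = D (1, 0) + u s z * D (0, 1) := by
      have h1 : ((1:ℝ), u s z) = ((1:ℝ), (0:ℝ)) + u s z • ((0:ℝ), (1:ℝ)) := by
        simp [Prod.ext_iff]
      rw [h1, map_add, ContinuousLinearMap.map_smul, smul_eq_mul]
    have hpde' := hpde s z
    rw [hts.deriv, hxs.deriv] at hpde'
    have : D (1, u s z) = -2 * deriv (u s) z * y s z := by rw [hsplit]; linarith
    rw [this] at hcomp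
    exact hcomp
  have hE2 : (Real.exp A) ^ 2 = Real.exp (2 * A) := by
    rw [sq, ← Real.exp_add, two_mul]
  by_cases hex : ∃ σ ∈ Set.Icc (0:ℝ) t, k σ = 0
  · obtain ⟨σ, _, hkσ⟩ := hex
    have hbound : ∀ s, |(-2 * b s * k s)| ≤ (2 * L) * |k s| := by
      intro s
      rw [abs_mul, abs_mul]
      have : |(-2:ℝ)| = 2 := by norm_num
      rw [this]
      have hb : |b s| ≤ L := hu_lip s (q s x)
      nlinarith [abs_nonneg (k s), abs_nonneg (b s)]
    have hall := zero_of_ode (K := 2 * L) (by linarith) hk' hbound hkσ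
    have h0 : y 0 x = 0 := by
      have := hall 0
      simp only [hkdef] at this
      rwa [hq0] at this
    rw [h0, show y t (q t x) = 0 from hall t]
    ring
  · push_neg at hex
    have hφ : ∀ s ∈ Set.uIcc (0:ℝ) t, HasDerivAt (fun s => Real.log (k s)) (-2 * b s) s := by
      intro s hs
      rw [Set.uIcc_of_le ht0] at hs
      have := (hk' s).log (hex s hs)
      rwa [mul_div_cancel_right₀ _ (hex s hs)] at this
    have hint2 : IntervalIntegrable (fun s => -2 * b s) MeasureTheory.volume 0 t :=
      hbint.const_mul (-2)
    have hFTC := intervalIntegral.integral_eq_sub_of_hasDerivAt hφ hint2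
    rw [intervalIntegral.integral_const_mul, ← hAdef] at hFTC
    have hk0 : k 0 ≠ 0 := hex 0 ⟨le_rfl, ht0⟩
    have hkt : k t ≠ 0 := hex t ⟨ht0, le_rfl⟩
    have hlog : Real.log (k 0) = Real.log (k t) + 2 * A := by linarith
    have habs : |k 0| = |k t| * Real.exp (2 * A) := by
      have := congrArg Real.exp hlog
      rwa [Real.exp_log_eq_abs hk0, Real.exp_add, Real.exp_log_eq_abs hkt] at this
    have hkcont : ContinuousOn k (Set.Icc 0 t) :=
      (continuous_iff_continuousAt.2 fun s => (hk' s).continuousAt).continuousOn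
    have hsign : 0 < k t * k 0 := by
      have := same_sign ht0 hkcont hex
      linarith [this]
    have hkey : k 0 = k t * Real.exp (2 * A) :=
      eq_of_abs_eq_of_sign (Real.exp_pos _) habs hsign
    have h0 : y 0 x = k 0 := by rw [hkdef]; simp [hq0]
    rw [h0, hkey, hE2]
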